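/- Let G be a graph with distinguished vertex u and heights h(x) = d_G(u,x), and let (W1,W2) be a pair of wings for a quadruple (a,b,c,d) of vertices of G with W1 anticomplete to W2. Then for every integer i with h(a) ≤ i ≤ h(c), the vertex x of W1 with h(x) = i and the vertex y of W2 with h(y) = i are such that both (a,b,x,y) and (x,y,c,d) admit pairs of wings in G whose two wings are anticomplete to each other. -/

import Mathlib

open SimpleGraph

variable {V : Type*}

/-- A walk is monotone if its vertices have pairwise distinct heights. -/
def MonoWalk (G : SimpleGraph V) (u : V) {x y : V} (W : G.Walk x y) : Prop :=
  (W.support.map (fun z => G.dist u z)).Nodup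

/-- `P` is a shortest `x`-`y` path of `G`. -/
def IsShortestPath (G : SimpleGraph V) {x y : V} (P : G.Walk x y) : Prop :=
  P.IsPath ∧ P.length = G.dist x y

/-- `P` is an induced path of `G`: a path that equals the subgraph of `G`
induced by its vertex set. -/
def IsInducedPath (G : SimpleGraph V) {x y : V} (P : G.Walk x y) : Prop :=
  P.IsPath ∧ ∀ a b : V, a ∈ P.support → b ∈ P.support → G.Adj a b → P.toSubgraph.Adj a b

/-- A `uv`-trail of `G`: an induced `uv`-path of `G` that is not a shortest
`uv`-path of `G`. -/
def IsTrailPath (G : SimpleGraph V) (u v : V) (P : G.Walk u v) : Prop :=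
  IsInducedPath G P ∧ ¬ IsShortestPath G P

/-- A shortest `uv`-trail of `G`: a `uv`-trail of minimum number of edges. -/
def IsShortestTrail (G : SimpleGraph V) (u v : V) (P : G.Walk u v) : Prop :=
  IsTrailPath G u v P ∧ ∀ Q : G.Walk u v, IsTrailPath G u v Q → P.length ≤ Q.length

/-- `G` is `uv`-straight: every vertex lies on a shortest `uv`-path of `G`. -/
def Straight (G : SimpleGraph V) (u v : V) : Prop :=
  ∀ x : V, ∃ P : G.Walk u v, IsShortestPath G P ∧ x ∈ P.support

/-- Vertex sets `X` and `Y` are anticomplete in `G`: they are disjoint and there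
is no edge of `G` between them. -/
def Anticomplete (G : SimpleGraph V) (X Y : Set V) : Prop :=
  ∀ x ∈ X, ∀ y ∈ Y, x ≠ y ∧ ¬ G.Adj x y

/-- `x` and `y` are connected in the subgraph of `G` induced by `A`. -/
def ConnIn (G : SimpleGraph V) (A : Set V) (x y : V) : Prop :=
  ∃ W : G.Walk x y, ∀ z ∈ W.support, z ∈ A

/-- The closed neighborhood `N_G[A]` of a vertex set `A`. -/
def closedNbhd (G : SimpleGraph V) (A : Set V) : Set V :=
  {y | y ∈ A ∨ ∃ x ∈ A, G.Adj x y}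

/-- `(s, t)` is the twist pair of the `uv`-path `P`: `P[u,s]` is the maximal
monotone prefix of `P` and `P[t,v]` is the maximal monotone suffix of `P`. -/
def IsTwistPair [DecidableEq V] (G : SimpleGraph V) (u v : V) (P : G.Walk u v)
    (s t : V) : Prop :=
  ∃ (hs : s ∈ P.support) (ht : t ∈ P.support),
    MonoWalk G u (P.takeUntil s hs) ∧ MonoWalk G u (P.dropUntil t ht) ∧
    (∀ (s' : V) (hs' : s' ∈ P.support), MonoWalk G u (P.takeUntil s' hs') →
      (P.takeUntil s' hs').length ≤ (P.takeUntil s hs).length) ∧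
    (∀ (t' : V) (ht' : t' ∈ P.support), MonoWalk G u (P.dropUntil t' ht') →
      (P.dropUntil t' ht').length ≤ (P.dropUntil t ht).length)

/-- `(W1, W2)` is a pair of wings for the quadruple `(a, b, c, d)` in `G`
(with respect to heights measured from `u`): `W1` is a monotone `c`-`a*`-path
containing `a`, `W2` is a monotone `b`-`d*`-path containing `d`,
`h(a*) + 1 = h(a) = h(b) ≤ h(c) = h(d) = h(d*) - 1`, `W1 - c` is anticomplete
to `W2`, and `W1` is anticomplete to `W2 - b`. -/
def IsWingPair (G : SimpleGraph V) (u : V) (a b c d : V) {astar dstar : V}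
    (W1 : G.Walk c astar) (W2 : G.Walk b dstar) : Prop :=
  W1.IsPath ∧ W2.IsPath ∧ MonoWalk G u W1 ∧ MonoWalk G u W2 ∧
  a ∈ W1.support ∧ d ∈ W2.support ∧
  G.dist u astar + 1 = G.dist u a ∧ G.dist u a = G.dist u b ∧
  G.dist u b ≤ G.dist u c ∧ G.dist u c = G.dist u d ∧
  G.dist u d + 1 = G.dist u dstar ∧
  Anticomplete G {x | x ∈ W1.support ∧ x ≠ c} {x | x ∈ W2.support} ∧
  Anticomplete G {x | x ∈ W1.support} {x | x ∈ W2.support ∧ x ≠ b}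

/-- The quadruple `(a, b, c, d)` is winged in `G`. -/
def Winged (G : SimpleGraph V) (u : V) (a b c d : V) : Prop :=
  ∃ (astar dstar : V) (W1 : G.Walk c astar) (W2 : G.Walk b dstar),
    IsWingPair G u a b c d W1 W2

/-- The quadruple `(a, b, c, d)` admits a pair of wings `(W1, W2)` in `G` with
`W1` anticomplete to `W2`. -/
def WingedAnti (G : SimpleGraph V) (u : V) (a b c d : V) : Prop :=
  ∃ (astar dstar : V) (W1 : G.Walk c astar) (W2 : G.Walk b dstar),
    IsWingPair G u a b c d W1 W2 ∧
    Anticomplete G {x | x ∈ W1.support} {x | x ∈ W2.support}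

/-- For a `uv`-trail `P` of a `uv`-straight graph `G` with twist pair `(s, t)`,
a monotone `uc`-path `S` of `G` with `h(c) = h(s)` is a sidetrack for `P` if
(S1) `G` contains a monotone `tv`-path `T` with `S - c` anticomplete to `T` and
`S` anticomplete to `T - t`, and (S2) `S` contains the vertex `a` of `P[u,s]`
with `h(a) = h(t)`. -/
def IsSidetrack [DecidableEq V] (G : SimpleGraph V) (u v : V) (P : G.Walk u v)
    (s t : V) {c : V} (S : G.Walk u c) : Prop :=
  S.IsPath ∧ MonoWalk G u S ∧ G.dist u c = G.dist u s ∧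
  (∃ (T : G.Walk t v), T.IsPath ∧ MonoWalk G u T ∧
    Anticomplete G {x | x ∈ S.support ∧ x ≠ c} {x | x ∈ T.support} ∧
    Anticomplete G {x | x ∈ S.support} {x | x ∈ T.support ∧ x ≠ t}) ∧
  (∀ (hs : s ∈ P.support) (a : V),
    a ∈ (P.takeUntil s hs).support → G.dist u a = G.dist u t → a ∈ S.support)

section AuxST15

variable {G : SimpleGraph V} {u : V}

private lemma cons_sublist_append' {α : Type*} {w : α} {A B : List α} (h : w ∈ A) :
    List.Sublist (w :: B) (A ++ B) := by
  obtain ⟨s, t, rfl⟩ := List.append_of_mem h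
  have h1 : List.Sublist (w :: B) (w :: (t ++ B)) :=
    List.Sublist.cons₂ _ (List.sublist_append_right t B)
  have h2 : List.Sublist (w :: (t ++ B)) (s ++ (w :: (t ++ B))) :=
    List.sublist_append_right _ _
  have h3 : s ++ (w :: (t ++ B)) = (s ++ w :: t) ++ B := by simp
  exact h3 ▸ (h1.trans h2)

private lemma takeUntil_support_sublist [DecidableEq V] {p q w : V} (W : G.Walk p q)
    (h : w ∈ W.support) : List.Sublist (W.takeUntil w h).support W.support := by
  conv_rhs => rw [← W.take_spec h]
  rw [Walk.support_append]
  exact List.sublist_append_left _ _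

private lemma dropUntil_support_sublist [DecidableEq V] {p q w : V} (W : G.Walk p q)
    (h : w ∈ W.support) : List.Sublist (W.dropUntil w h).support W.support := by
  conv_rhs => rw [← W.take_spec h]
  rw [Walk.support_append, (W.dropUntil w h).support_eq_cons]
  exact cons_sublist_append' (Walk.end_mem_support _)

private lemma dist_step {p p' : V} (hr : G.Reachable u p) (h : G.Adj p p') :
    G.dist u p' ≤ G.dist u p + 1 := by
  obtain ⟨P, hP⟩ := hr.exists_walk_length_eq_dist
  have := SimpleGraph.dist_le (P.concat h)
  rwa [Walk.length_concat, hP] at this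

private lemma walk_ivt {p q : V} (W : G.Walk p q) :
    G.Reachable u p → ∀ k, G.dist u q ≤ k → k ≤ G.dist u p →
    ∃ z ∈ W.support, G.dist u z = k := by
  induction W with
  | nil => exact fun _ k h1 h2 => ⟨_, Walk.start_mem_support _, le_antisymm h1 h2⟩
  | @cons p₁ p₂ q₁ h W' ih =>
    intro hr k h1 h2
    by_cases hk : k ≤ G.dist u p₂
    · obtain ⟨z, hz, hz2⟩ := ih (hr.trans h.reachable) k h1 hk
      exact ⟨z, by simp [Walk.support_cons, hz], hz2⟩
    · have := dist_step (hr.trans h.reachable) h.symm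
      exact ⟨p₁, Walk.start_mem_support _, by omega⟩

private lemma desc {p q : V} (W : G.Walk p q) :
    G.Reachable u p → MonoWalk G u W → G.dist u q < G.dist u p →
    (W.support.map (G.dist u)).Chain' (fun m n => m = n + 1) := by
  induction W with
  | nil => intro _ _ hlt; exact absurd hlt (lt_irrefl _)
  | @cons p₁ p₂ q₁ h W' ih =>
    intro hr hm hlt
    have hrp2 : G.Reachable u p₂ := hr.trans h.reachable
    have s1 : G.dist u p₂ ≤ G.dist u p₁ + 1 := dist_step hr h
    have s2 : G.dist u p₁ ≤ G.dist u p₂ + 1 := dist_step hrp2 h.symm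
    have hm0 := hm
    unfold MonoWalk at hm0
    rw [Walk.support_cons, List.map_cons, List.nodup_cons] at hm0
    have hnotin : G.dist u p₁ ∉ W'.support.map (fun z => G.dist u z) := hm0.1
    have hm' : MonoWalk G u W' := hm0.2
    have hne : G.dist u p₁ ≠ G.dist u p₂ := by
      intro hEq
      exact hnotin (by rw [hEq]; exact List.mem_map_of_mem W'.start_mem_support)
    rcases (by omega : G.dist u p₂ = G.dist u p₁ + 1 ∨ G.dist u p₁ = G.dist u p₂ + 1)
      with hcase | hcase
    · obtain ⟨z, hz, hzd⟩ := walk_ivt W' hrp2 (G.dist u p₁) (by omega) (by omega)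
      exact absurd (by rw [← hzd]; exact List.mem_map_of_mem hz) hnotin
    · cases W' with
      | nil =>
        simp only [Walk.support_cons, Walk.support_nil, List.map_cons, List.map_nil]
        exact List.isChain_pair.mpr hcase
      | @cons _ p₃ _ h2 W'' =>
        have hq : G.dist u q₁ < G.dist u p₂ := by
          have hqmem : G.dist u q₁ ∈ W''.support.map (fun z => G.dist u z) :=
            List.mem_map_of_mem W''.end_mem_support
          have hnotin2 : G.dist u p₂ ∉ W''.support.map (fun z => G.dist u z) := by
            have := hm'
            unfold MonoWalk at this
            rw [Walk.support_cons, List.map_cons, List.nodup_cons] at this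
            exact this.1
          have hne2 : G.dist u q₁ ≠ G.dist u p₂ := by
            intro hEq; rw [hEq] at hqmem; exact hnotin2 hqmem
          omega
        have hchain := ih hrp2 hm' hq
        rw [Walk.support_cons, List.map_cons]
        refine List.IsChain.cons hchain ?_
        intro z hz
        rw [Walk.support_cons, List.map_cons, List.head?_cons] at hz
        rw [Option.mem_some_iff] at hz
        omega

private lemma asc {p q : V} (W : G.Walk p q) (hr : G.Reachable u q) (hm : MonoWalk G u W)
    (hlt : G.dist u p < G.dist u q) :
    (W.support.map (G.dist u)).Chain' (fun m n => n = m + 1) := by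
  have hm' : MonoWalk G u W.reverse := by
    unfold MonoWalk at hm ⊢
    rwa [Walk.support_reverse, List.map_reverse, List.nodup_reverse]
  have h := desc W.reverse hr hm' hlt
  unfold List.Chain' at h
  rw [Walk.support_reverse, List.map_reverse, List.isChain_reverse] at h
  exact h

end AuxST15

section AuxST15b

variable {G : SimpleGraph V} {u : V}

private lemma chain_desc_pairwise {l : List ℕ} (hc : l.Chain' (fun m n => m = n + 1)) :
    l.Pairwise (· > ·) :=
  List.isChain_iff_pairwise.mp (hc.imp (fun _ _ h => by omega))

private lemma chain_asc_pairwise {l : List ℕ} (hc : l.Chain' (fun m n => n = m + 1)) :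
    l.Pairwise (· < ·) :=
  List.isChain_iff_pairwise.mp (hc.imp (fun _ _ h => by omega))

private lemma le_start_of_pairwise {p q : V} (W : G.Walk p q)
    (hp : (W.support.map (G.dist u)).Pairwise (· > ·)) :
    ∀ z ∈ W.support, G.dist u z ≤ G.dist u p := by
  intro z hz
  rw [W.support_eq_cons] at hz hp
  rw [List.map_cons, List.pairwise_cons] at hp
  rcases List.mem_cons.mp hz with rfl | hz
  · exact le_refl _
  · exact le_of_lt (hp.1 _ (List.mem_map_of_mem hz))

private lemma end_le_of_pairwise {p q : V} (W : G.Walk p q)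
    (hp : (W.support.map (G.dist u)).Pairwise (· > ·)) :
    ∀ z ∈ W.support, G.dist u q ≤ G.dist u z := by
  intro z hz
  have hp' : (W.reverse.support.map (G.dist u)).Pairwise (· < ·) := by
    rw [Walk.support_reverse, List.map_reverse]
    exact List.pairwise_reverse.mpr hp
  have hz' : z ∈ W.reverse.support := by
    rwa [Walk.support_reverse, List.mem_reverse]
  rw [W.reverse.support_eq_cons] at hz' hp'
  rw [List.map_cons, List.pairwise_cons] at hp'
  rcases List.mem_cons.mp hz' with rfl | hz'
  · exact le_refl _
  · exact le_of_lt (hp'.1 _ (List.mem_map_of_mem hz'))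

private lemma le_end_of_pairwise_lt {p q : V} (W : G.Walk p q)
    (hp : (W.support.map (G.dist u)).Pairwise (· < ·)) :
    ∀ z ∈ W.support, G.dist u z ≤ G.dist u q := by
  intro z hz
  have hp' : (W.reverse.support.map (G.dist u)).Pairwise (· > ·) := by
    rw [Walk.support_reverse, List.map_reverse]
    exact List.pairwise_reverse.mpr hp
  have hz' : z ∈ W.reverse.support := by
    rwa [Walk.support_reverse, List.mem_reverse]
  exact le_start_of_pairwise W.reverse hp' z hz'

private lemma mono_inj {p q : V} (W : G.Walk p q) (hm : MonoWalk G u W) :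
    ∀ z ∈ W.support, ∀ w ∈ W.support, G.dist u z = G.dist u w → z = w :=
  fun _ hz _ hw h => List.inj_on_of_nodup_map hm hz hw h

private lemma anti_mono {X Y X' Y' : Set V} (h : Anticomplete G X Y)
    (hX : X' ⊆ X) (hY : Y' ⊆ Y) : Anticomplete G X' Y' :=
  fun x hx y hy => h x (hX hx) y (hY hy)

end AuxST15b

/-- Let `(W1, W2)` be a pair of wings for `(a, b, c, d)` in
`G` with `W1` anticomplete to `W2`. Then for every integer `i` with
`h(a) ≤ i ≤ h(c)`, the vertex `x` of `W1` with `h(x) = i` and the vertex `y` of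
`W2` with `h(y) = i` are such that both `(a, b, x, y)` and `(x, y, c, d)` admit
pairs of wings in `G` whose two wings are anticomplete to each other. -/
theorem statement15 [Fintype V] [DecidableEq V] (G : SimpleGraph V) (u : V)
    (a b c d astar dstar : V)
    (W1 : G.Walk c astar) (W2 : G.Walk b dstar)
    (hwings : IsWingPair G u a b c d W1 W2)
    (hanti : Anticomplete G {z | z ∈ W1.support} {z | z ∈ W2.support})
    (i : ℕ) (hi1 : G.dist u a ≤ i) (hi2 : i ≤ G.dist u c)
    (x y : V) (hx : x ∈ W1.support) (hhx : G.dist u x = i)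
    (hy : y ∈ W2.support) (hhy : G.dist u y = i) :
    WingedAnti G u a b x y ∧ WingedAnti G u x y c d := by
  unfold WingedAnti IsWingPair
  unfold IsWingPair at hwings
  obtain ⟨hW1p, hW2p, hW1m, hW2m, haW1, hdW2, hastar, hab, hbc, hcd, hdstar, -, -⟩ := hwings
  -- reachability
  have hrc : G.Reachable u c := Reachable.of_dist_ne_zero (by omega)
  have hrx : G.Reachable u x := Reachable.of_dist_ne_zero (by omega)
  have hrdstar : G.Reachable u dstar := Reachable.of_dist_ne_zero (by omega)
  -- chains and pairwise on W1, W2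
  have hchain1 := desc W1 hrc hW1m (by omega)
  have hpair1 : (W1.support.map (G.dist u)).Pairwise (· > ·) := chain_desc_pairwise hchain1
  have hchain2 := asc W2 hrdstar hW2m (by omega)
  have hpair2 : (W2.support.map (G.dist u)).Pairwise (· < ·) := chain_asc_pairwise hchain2
  -- monotone subwalks
  have hD1m : MonoWalk G u (W1.dropUntil x hx) :=
    ((dropUntil_support_sublist W1 hx).map _).nodup hW1m
  have hE2m : MonoWalk G u (W2.dropUntil y hy) :=
    ((dropUntil_support_sublist W2 hy).map _).nodup hW2m
  have hT1m : MonoWalk G u (W1.takeUntil x hx) :=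
    ((takeUntil_support_sublist W1 hx).map _).nodup hW1m
  have hT2m : MonoWalk G u (W2.takeUntil y hy) :=
    ((takeUntil_support_sublist W2 hy).map _).nodup hW2m
  -- successor of x in W1
  have hD1chain := desc (W1.dropUntil x hx) hrx hD1m (by omega)
  obtain ⟨x2, e1, hx2d, hx2mem⟩ :
      ∃ x2, G.Adj x x2 ∧ G.dist u x2 + 1 = G.dist u x ∧ x2 ∈ W1.support := by
    cases hD : W1.dropUntil x hx with
    | nil => exfalso; omega
    | cons e D' =>
      unfold List.Chain' at hD1chain
      rw [hD, Walk.support_cons, D'.support_eq_cons, List.map_cons, List.map_cons,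
        List.isChain_cons_cons] at hD1chain
      refine ⟨_, e, hD1chain.1.symm, ?_⟩
      refine Walk.support_dropUntil_subset W1 hx ?_
      rw [hD, Walk.support_cons]
      exact List.mem_cons_of_mem _ D'.start_mem_support
  -- successor of y in W2
  have hE2chain := asc (W2.dropUntil y hy) hrdstar hE2m (by omega)
  obtain ⟨y2, e2, hy2d, hy2mem⟩ :
      ∃ y2, G.Adj y y2 ∧ G.dist u y2 = G.dist u y + 1 ∧ y2 ∈ W2.support := by
    cases hE : W2.dropUntil y hy with
    | nil => exfalso; omega
    | cons e E' =>
      unfold List.Chain' at hE2chain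
      rw [hE, Walk.support_cons, E'.support_eq_cons, List.map_cons, List.map_cons,
        List.isChain_cons_cons] at hE2chain
      refine ⟨_, e, hE2chain.1, ?_⟩
      refine Walk.support_dropUntil_subset W2 hy ?_
      rw [hE, Walk.support_cons]
      exact List.mem_cons_of_mem _ E'.start_mem_support
  -- bounds on takeUntil supports
  have hT1pair : ((W1.takeUntil x hx).support.map (G.dist u)).Pairwise (· > ·) :=
    hpair1.sublist ((takeUntil_support_sublist W1 hx).map _)
  have hT2pair : ((W2.takeUntil y hy).support.map (G.dist u)).Pairwise (· < ·) :=
    hpair2.sublist ((takeUntil_support_sublist W2 hy).map _)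
  have hT1ge : ∀ z ∈ (W1.takeUntil x hx).support, i ≤ G.dist u z := by
    intro z hz
    have := end_le_of_pairwise _ hT1pair z hz
    omega
  have hT2le : ∀ z ∈ (W2.takeUntil y hy).support, G.dist u z ≤ i := by
    intro z hz
    have := le_end_of_pairwise_lt _ hT2pair z hz
    omega
  -- a is in the drop part of W1
  have hsupp1 : W1.support =
      (W1.takeUntil x hx).support ++ (W1.dropUntil x hx).support.tail := by
    conv_lhs => rw [← W1.take_spec hx]
    exact Walk.support_append _ _
  have haD1 : a ∈ (W1.dropUntil x hx).support := by
    have haW1' := haW1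
    rw [hsupp1] at haW1'
    rcases List.mem_append.mp haW1' with h | h
    · have h1 := hT1ge a h
      have hax : a = x := mono_inj W1 hW1m a haW1 x hx (by omega)
      rw [hax]; exact Walk.start_mem_support _
    · exact List.mem_of_mem_tail h
  -- d is in the drop part of W2
  have hsupp2 : W2.support =
      (W2.takeUntil y hy).support ++ (W2.dropUntil y hy).support.tail := by
    conv_lhs => rw [← W2.take_spec hy]
    exact Walk.support_append _ _
  have hdE2 : d ∈ (W2.dropUntil y hy).support := by
    have hdW2' := hdW2
    rw [hsupp2] at hdW2'
    rcases List.mem_append.mp hdW2' with h | h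
    · have h1 := hT2le d h
      have hdy : d = y := mono_inj W2 hW2m d hdW2 y hy (by omega)
      rw [hdy]; exact Walk.start_mem_support _
    · exact List.mem_of_mem_tail h
  -- the concatenated wings
  have hx2T1 : x2 ∉ (W1.takeUntil x hx).support := fun h => by
    have := hT1ge x2 h; omega
  have hy2T2 : y2 ∉ (W2.takeUntil y hy).support := fun h => by
    have := hT2le y2 h; omega
  have hA2p : ((W1.takeUntil x hx).concat e1).IsPath := by
    rw [Walk.isPath_def, Walk.support_concat, List.nodup_append']
    exact ⟨(hW1p.takeUntil hx).support_nodup, List.nodup_singleton _,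
      by simpa using hx2T1⟩
  have hB1p : ((W2.takeUntil y hy).concat e2).IsPath := by
    rw [Walk.isPath_def, Walk.support_concat, List.nodup_append']
    exact ⟨(hW2p.takeUntil hy).support_nodup, List.nodup_singleton _,
      by simpa using hy2T2⟩
  have hA2m : MonoWalk G u ((W1.takeUntil x hx).concat e1) := by
    unfold MonoWalk
    rw [Walk.support_concat, List.map_append, List.nodup_append']
    refine ⟨hT1m, List.nodup_singleton _, ?_⟩
    intro m hm
    simp only [List.map_cons, List.map_nil, List.mem_singleton]
    obtain ⟨z, hz, rfl⟩ := List.mem_map.mp hm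
    have := hT1ge z hz
    intro hEq
    omega
  have hB1m : MonoWalk G u ((W2.takeUntil y hy).concat e2) := by
    unfold MonoWalk
    rw [Walk.support_concat, List.map_append, List.nodup_append']
    refine ⟨hT2m, List.nodup_singleton _, ?_⟩
    intro m hm
    simp only [List.map_cons, List.map_nil, List.mem_singleton]
    obtain ⟨z, hz, rfl⟩ := List.mem_map.mp hm
    have := hT2le z hz
    intro hEq
    omega
  -- membership of endpoints
  have hxA2 : x ∈ ((W1.takeUntil x hx).concat e1).support := by
    rw [Walk.support_concat]
    exact List.mem_append_left _ (Walk.end_mem_support _)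
  have hyB1 : y ∈ ((W2.takeUntil y hy).concat e2).support := by
    rw [Walk.support_concat]
    exact List.mem_append_left _ (Walk.end_mem_support _)
  -- support subsets
  have hDsub : ∀ z, z ∈ (W1.dropUntil x hx).support → z ∈ W1.support :=
    fun z hz => Walk.support_dropUntil_subset W1 hx hz
  have hEsub : ∀ z, z ∈ (W2.dropUntil y hy).support → z ∈ W2.support :=
    fun z hz => Walk.support_dropUntil_subset W2 hy hz
  have hA2sub : ∀ z, z ∈ ((W1.takeUntil x hx).concat e1).support → z ∈ W1.support := by
    intro z hz
    rw [Walk.support_concat] at hz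
    rcases List.mem_append.mp hz with h | h
    · exact Walk.support_takeUntil_subset W1 hx h
    · rw [List.mem_singleton] at h; rw [h]; exact hx2mem
  have hB1sub : ∀ z, z ∈ ((W2.takeUntil y hy).concat e2).support → z ∈ W2.support := by
    intro z hz
    rw [Walk.support_concat] at hz
    rcases List.mem_append.mp hz with h | h
    · exact Walk.support_takeUntil_subset W2 hy h
    · rw [List.mem_singleton] at h; rw [h]; exact hy2mem
  constructor
  · exact ⟨astar, y2, W1.dropUntil x hx, (W2.takeUntil y hy).concat e2,
      ⟨hW1p.dropUntil hx, hB1p, hD1m, hB1m, haD1, hyB1, hastar, hab,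
        by omega, by omega, by omega,
        anti_mono hanti (fun z hz => hDsub z hz.1) (fun z hz => hB1sub z hz),
        anti_mono hanti (fun z hz => hDsub z hz) (fun z hz => hB1sub z hz.1)⟩,
      anti_mono hanti (fun z hz => hDsub z hz) (fun z hz => hB1sub z hz)⟩
  · exact ⟨x2, dstar, (W1.takeUntil x hx).concat e1, W2.dropUntil y hy,
      ⟨hA2p, hW2p.dropUntil hy, hA2m, hE2m, hxA2, hdE2, hx2d,
        by omega, by omega, hcd, hdstar,
        anti_mono hanti (fun z hz => hA2sub z hz.1) (fun z hz => hEsub z hz),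
        anti_mono hanti (fun z hz => hA2sub z hz) (fun z hz => hEsub z hz.1)⟩,
      anti_mono hanti (fun z hz => hA2sub z hz) (fun z hz => hEsub z hz)⟩
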